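/- Let D be a field of characteristic 2 and f, g : D → D additive functions satisfying x^{-1} f(x) + g(x^{-1}) = 0 for all x ≠ 0. Then f = g, and f(aba) = a f(b) for all a, b ∈ D. -/

import Mathlib

theorem stmt_12 (D : Type*) [Field D] [CharP D 2] (f g : D → D)
    (hf : ∀ x y, f (x + y) = f x + f y)
    (hg : ∀ x y, g (x + y) = g x + g y)
    (hfg : ∀ x : D, x ≠ 0 → x⁻¹ * f x + g x⁻¹ = 0) :
    f = g ∧ ∀ a b : D, f (a * b * a) = a * f b := by
  have two0 : (2 : D) = 0 := by
    simpa using CharP.cast_eq_zero D 2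
  have hf0 : f 0 = 0 := by
    have h := hf 0 0; simp only [add_zero] at h
    exact (left_eq_add.mp h)
  have hg0 : g 0 = 0 := by
    have h := hg 0 0; simp only [add_zero] at h
    exact (left_eq_add.mp h)
  -- g (x⁻¹) = x⁻¹ * f x for x ≠ 0
  have hgf : ∀ x : D, x ≠ 0 → g x⁻¹ = x⁻¹ * f x := by
    intro x hx
    have h := hfg x hx
    linear_combination h - (f x * x⁻¹) * two0
  have hgx : ∀ x : D, x ≠ 0 → g x = x * f x⁻¹ := by
    intro x hx
    have h := hgf x⁻¹ (inv_ne_zero hx)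
    simpa [inv_inv] using h
  -- key identity
  have key : ∀ x t : D, x ≠ 0 → t ≠ 0 → x + t ≠ 0 → f (x ^ 2 / t) = x / t * f t := by
    intro x t hx ht hxt
    have h1 : x⁻¹ + (x + t)⁻¹ = (x * (x + t) / t)⁻¹ := by
      rw [inv_div]
      field_simp
      linear_combination x * two0
    have h2 : g x⁻¹ + g (x + t)⁻¹ = g ((x * (x + t) / t)⁻¹) := by
      rw [← hg, h1]
    have hne : x * (x + t) / t ≠ 0 := by
      apply div_ne_zero (mul_ne_zero hx hxt) ht
    rw [hgf x hx, hgf (x + t) hxt, hgf _ hne] at h2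
    have h3 : x * (x + t) / t = x ^ 2 / t + x := by
      field_simp
    rw [h3, hf, hf] at h2
    have hd : x ^ 2 + x * t ≠ 0 := by
      intro h; exact mul_ne_zero hx hxt (by linear_combination h)
    have hd2 : t * x + x ^ 2 ≠ 0 := by
      intro h; exact hd (by linear_combination h)
    have h4 : f x * (x + t) + (f x + f t) * x = t * (f (x ^ 2 / t) + f x) := by
      apply mul_right_cancel₀ hd
      field_simp at h2
      linear_combination (x ^ 2 + x * t) * h2
    rw [div_mul_eq_mul_div, eq_div_iff ht]
    linear_combination -h4 + x * f x * two0
  have feq : f = g := by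
    funext b
    by_cases hb : b = 0
    · rw [hb, hf0, hg0]
    by_cases hb1 : b = 1
    · subst hb1
      have h := hfg 1 one_ne_zero
      simp only [inv_one, one_mul] at h
      linear_combination h - g 1 * two0
    · have hne : (1 : D) + b⁻¹ ≠ 0 := by
        intro h
        apply hb1
        have hb' : b⁻¹ = 1 := by linear_combination h - two0
        exact inv_eq_one.mp hb'
      have hk := key 1 b⁻¹ one_ne_zero (inv_ne_zero hb) hne
      simp only [one_pow, one_div, inv_inv] at hk
      rw [hgx b hb]
      exact hk
  refine ⟨feq, ?_⟩
  intro a b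
  by_cases ha : a = 0
  · subst ha; simp [hf0]
  by_cases hb : b = 0
  · subst hb; simp [hf0]
  by_cases hab : a = b⁻¹
  · subst hab
    rw [show b⁻¹ * b * b⁻¹ = b⁻¹ by field_simp]
    have h := hgx b hb
    rw [show g b = f b by rw [feq]] at h
    rw [h, inv_mul_cancel_left₀ hb]
  · have hne : a + b⁻¹ ≠ 0 := by
      intro h
      apply hab
      linear_combination h - b⁻¹ * two0
    have hk := key a b⁻¹ ha (inv_ne_zero hb) hne
    rw [show a * b * a = a ^ 2 / b⁻¹ by field_simp, hk, div_eq_mul_inv, inv_inv,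
      mul_assoc, ← hgx b hb, feq]
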